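/- If a partial order P is the intersection of a linear order L and an interval order P_I on the same ground set, then for any suborder 2+2 in P with relations a0 ≺_P b0 and a1 ≺_P b1, the implications a0 ≺_L a1 ⟺ b0 ≺_L a1 ⟺ b0 ≺_L b1 ⟺ a0 ≺_L b1 hold. -/
import Mathlib


variable {V : Type*}

/-- A strict partial order: irreflexive and transitive. -/
def IsPartialOrd (P : V → V → Prop) : Prop := Irreflexive P ∧ Transitive P

/-- A strict linear order: irreflexive, transitive, and total. -/
def IsLinearOrd (L : V → V → Prop) : Prop :=
  Irreflexive L ∧ Transitive L ∧ ∀ u v : V, u ≠ v → L u v ∨ L v u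

/-- `L` is a linear extension of `P`. -/
def IsLinExt (P L : V → V → Prop) : Prop :=
  IsLinearOrd L ∧ ∀ u v : V, P u v → L u v

/-- Four distinct elements `a0, b0, a1, b1` form a suborder `2+2` of `P`:
their only `P`-relations are `a0 ≺ b0` and `a1 ≺ b1`. -/
def IsTwoPlusTwo (P : V → V → Prop) (a0 b0 a1 b1 : V) : Prop :=
  ([a0, b0, a1, b1] : List V).Nodup ∧ P a0 b0 ∧ P a1 b1 ∧
  ¬ P b0 a0 ∧ ¬ P b1 a1 ∧
  ¬ P a0 a1 ∧ ¬ P a1 a0 ∧ ¬ P a0 b1 ∧ ¬ P b1 a0 ∧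
  ¬ P a1 b0 ∧ ¬ P b0 a1 ∧ ¬ P b0 b1 ∧ ¬ P b1 b0

/-- The linear extension `L` of `P` fulfills the `2+2` rule. -/
def TwoPlusTwoRule (P L : V → V → Prop) : Prop :=
  ∀ a0 b0 a1 b1 : V, IsTwoPlusTwo P a0 b0 a1 b1 → L b0 a1 ∨ L b1 a0

/-- Four distinct elements form an alternating 4-anticycle of `L` w.r.t. `P`. -/
def IsAlt4Anticycle (P L : V → V → Prop) (a0 b0 a1 b1 : V) : Prop :=
  ([a0, b0, a1, b1] : List V).Nodup ∧ P a0 b0 ∧ P a1 b1 ∧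
  L a1 b0 ∧ ¬ P a1 b0 ∧ L a0 b1 ∧ ¬ P a0 b1

/-- An alternating `2k`-anticycle of `L` w.r.t. `P`, given by `a, b : ZMod k → V`. -/
def IsAltAnticycle (P L : V → V → Prop) (k : ℕ) (a b : ZMod k → V) : Prop :=
  Function.Injective a ∧ Function.Injective b ∧ (∀ i j : ZMod k, a i ≠ b j) ∧
  ∀ i : ZMod k, P (a i) (b i) ∧ L (a (i + 1)) (b i) ∧ ¬ P (a (i + 1)) (b i)

/-- `P` is a linear-interval order: the intersection of a linear order and an
interval order (given by an interval representation `l`, `r`). -/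
def IsLinearIntervalOrder (P : V → V → Prop) : Prop :=
  ∃ (L : V → V → Prop) (l r : V → ℝ), IsLinearOrd L ∧ (∀ v, l v ≤ r v) ∧
    ∀ u v : V, P u v ↔ L u v ∧ r u < l v

theorem stmt1 {V : Type*} (P L : V → V → Prop) (l r : V → ℝ)
    (hL : IsLinearOrd L) (hlr : ∀ v, l v ≤ r v)
    (hP : ∀ u v : V, P u v ↔ L u v ∧ r u < l v)
    (a0 b0 a1 b1 : V) (h22 : IsTwoPlusTwo P a0 b0 a1 b1) :
    (L a0 a1 ↔ L b0 a1) ∧ (L b0 a1 ↔ L b0 b1) ∧ (L b0 b1 ↔ L a0 b1) := by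
  obtain ⟨Lirr, Ltr, Ltot⟩ := hL
  obtain ⟨hnd, p00, p11, n1, n2, n3, n4, n5, n6, n7, n8, n9, n10⟩ := h22
  simp [List.nodup_cons, List.mem_cons] at hnd
  obtain ⟨⟨hab0, haa1, hab1⟩, ⟨hb0a1, hb0b1⟩, ha1b1⟩ := hnd
  have L00 : L a0 b0 := ((hP a0 b0).1 p00).1
  have r00 : r a0 < l b0 := ((hP a0 b0).1 p00).2
  have L11 : L a1 b1 := ((hP a1 b1).1 p11).1
  have r11 : r a1 < l b1 := ((hP a1 b1).1 p11).2
  -- key contradiction lemmas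
  have key1 : L a0 a1 → L a1 b0 → False := by
    intro h1 h2
    have e1 : l a1 ≤ r a0 := by
      by_contra h; exact n3 ((hP a0 a1).2 ⟨h1, lt_of_not_ge h⟩)
    have e2 : l b0 ≤ r a1 := by
      by_contra h; exact n7 ((hP a1 b0).2 ⟨h2, lt_of_not_ge h⟩)
    have L01 : L a0 b1 := Ltr h1 L11
    have e3 : l b1 ≤ r a0 := by
      by_contra h; exact n5 ((hP a0 b1).2 ⟨L01, lt_of_not_ge h⟩)
    linarith
  have key2 : L b0 b1 → L a1 b0 → False := by
    intro h1 h2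
    have L01 : L a0 b1 := Ltr L00 h1
    have e3 : l b1 ≤ r a0 := by
      by_contra h; exact n5 ((hP a0 b1).2 ⟨L01, lt_of_not_ge h⟩)
    have e2 : l b0 ≤ r a1 := by
      by_contra h; exact n7 ((hP a1 b0).2 ⟨h2, lt_of_not_ge h⟩)
    linarith
  have key3 : L a0 b1 → L b1 b0 → False := by
    intro h1 h2
    have e1 : l b1 ≤ r a0 := by
      by_contra h; exact n5 ((hP a0 b1).2 ⟨h1, lt_of_not_ge h⟩)
    have e2 : l b0 ≤ r b1 := by
      by_contra h; exact n10 ((hP b1 b0).2 ⟨h2, lt_of_not_ge h⟩)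
    have L10 : L a1 b0 := Ltr L11 h2
    have e3 : l b0 ≤ r a1 := by
      by_contra h; exact n7 ((hP a1 b0).2 ⟨L10, lt_of_not_ge h⟩)
    linarith
  refine ⟨⟨fun h => ?_, fun h => Ltr L00 h⟩,
          ⟨fun h => Ltr h L11, fun h => ?_⟩,
          ⟨fun h => Ltr L00 h, fun h => ?_⟩⟩
  · rcases Ltot b0 a1 hb0a1 with h' | h'
    · exact h'
    · exact absurd (key1 h h') (by simp)
  · rcases Ltot b0 a1 hb0a1 with h' | h'
    · exact h'
    · exact absurd (key2 h h') (by simp)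
  · rcases Ltot b0 b1 hb0b1 with h' | h'
    · exact h'
    · exact absurd (key3 h h') (by simp)
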